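/- The map (u,v) ↦ γ⁻¹(t γ(u) + (1−t) γ(v)) preserves 1-Lipschitzness: let γ(s) = tanh(s), t ∈ [0,1], and f, g : ℝ^N → ℝ be 1-Lipschitz. Then x ↦ γ⁻¹(t γ(f(x)) + (1−t) γ(g(x))) is 1-Lipschitz on ℝ^N. -/

import Mathlib

noncomputable section

/-- The inverse hyperbolic tangent, `γ⁻¹` for `γ = tanh`. -/
def arctanh (x : ℝ) : ℝ := (1 / 2) * Real.log ((1 + x) / (1 - x))

namespace Stmt15Aux

open Real

lemma tanh_mem_Ioo (x : ℝ) : Real.tanh x ∈ Set.Ioo (-1 : ℝ) 1 := by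
  rw [Real.tanh_eq_sinh_div_cosh, Set.mem_Ioo]
  have hc := Real.cosh_pos x
  have hs := Real.sinh_eq x
  have hce := Real.cosh_eq x
  have h1 := Real.exp_pos x
  have h2 := Real.exp_pos (-x)
  constructor
  · rw [lt_div_iff₀ hc]; nlinarith
  · rw [div_lt_one hc]; nlinarith

lemma hasDerivAt_tanh (x : ℝ) :
    HasDerivAt Real.tanh (1 - Real.tanh x ^ 2) x := by
  have hc := Real.cosh_pos x
  have h := (Real.hasDerivAt_sinh x).div (Real.hasDerivAt_cosh x) hc.ne'
  have key := Real.cosh_sq_sub_sinh_sq x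
  have hfun : (fun y => Real.sinh y / Real.cosh y) = Real.tanh := by
    funext y; rw [Real.tanh_eq_sinh_div_cosh]
  rw [show (Real.sinh / Real.cosh) = Real.tanh from hfun] at h
  refine h.congr_deriv ?_
  rw [Real.tanh_eq_sinh_div_cosh]
  field_simp

lemma tanh_monotone : Monotone Real.tanh := by
  apply monotone_of_deriv_nonneg
  · exact fun x => (hasDerivAt_tanh x).differentiableAt
  · intro x
    rw [(hasDerivAt_tanh x).deriv]
    have h := tanh_mem_Ioo x
    nlinarith [h.1, h.2]

lemma arctanh_le_arctanh {x y : ℝ} (hx : x ∈ Set.Ioo (-1 : ℝ) 1)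
    (hy : y ∈ Set.Ioo (-1 : ℝ) 1) (hxy : x ≤ y) : arctanh x ≤ arctanh y := by
  unfold arctanh
  have h1x : (0:ℝ) < 1 + x := by linarith [hx.1]
  have h2x : (0:ℝ) < 1 - x := by linarith [hx.2]
  have h1y : (0:ℝ) < 1 + y := by linarith [hy.1]
  have h2y : (0:ℝ) < 1 - y := by linarith [hy.2]
  have : (1 + x) / (1 - x) ≤ (1 + y) / (1 - y) := by
    rw [div_le_div_iff₀ h2x h2y]; nlinarith
  have hpos : (0:ℝ) < (1 + x) / (1 - x) := div_pos h1x h2x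
  have := Real.log_le_log hpos this
  linarith

/-- membership of the convex combination in `Ioo (-1) 1`. -/
lemma combo_mem {t u v : ℝ} (ht0 : 0 ≤ t) (ht1 : t ≤ 1) :
    t * Real.tanh u + (1 - t) * Real.tanh v ∈ Set.Ioo (-1 : ℝ) 1 := by
  have hu := tanh_mem_Ioo u
  have hv := tanh_mem_Ioo v
  rcases eq_or_lt_of_le ht0 with h | h
  · simp [← h]; exact hv
  · constructor
    · nlinarith [hu.1, hv.1]
    · nlinarith [hu.2, hv.2]

/-- derivative of the diagonal map. -/
lemma diag_hasDerivAt (t a b : ℝ) (ht0 : 0 ≤ t) (ht1 : t ≤ 1) (s : ℝ) :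
    HasDerivAt (fun s => arctanh (t * Real.tanh (s + a) + (1 - t) * Real.tanh (s + b)))
      ((t * (1 - Real.tanh (s + a) ^ 2) + (1 - t) * (1 - Real.tanh (s + b) ^ 2)) /
        (1 - (t * Real.tanh (s + a) + (1 - t) * Real.tanh (s + b)) ^ 2)) s := by
  set w : ℝ → ℝ := fun s => t * Real.tanh (s + a) + (1 - t) * Real.tanh (s + b) with hw
  have hmem : ∀ s, w s ∈ Set.Ioo (-1 : ℝ) 1 := fun s => combo_mem ht0 ht1
  set w' : ℝ → ℝ := fun s =>
    t * (1 - Real.tanh (s + a) ^ 2) + (1 - t) * (1 - Real.tanh (s + b) ^ 2) with hw'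
  have hwd : HasDerivAt w (w' s) s := by
    have ha : HasDerivAt (fun s : ℝ => s + a) 1 s := (hasDerivAt_id s).add_const a
    have hb : HasDerivAt (fun s : ℝ => s + b) 1 s := (hasDerivAt_id s).add_const b
    have h1 : HasDerivAt (fun s : ℝ => Real.tanh (s + a)) (1 - Real.tanh (s + a) ^ 2) s := by
      simpa [Function.comp_def] using (hasDerivAt_tanh (s + a)).comp s ha
    have h2 : HasDerivAt (fun s : ℝ => Real.tanh (s + b)) (1 - Real.tanh (s + b) ^ 2) s := by
      simpa [Function.comp_def] using (hasDerivAt_tanh (s + b)).comp s hb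
    exact (h1.const_mul t).add (h2.const_mul (1 - t))
  have hfun : (fun s => arctanh (w s)) =
      (fun s => (1 / 2) * (Real.log (1 + w s) - Real.log (1 - w s))) := by
    funext s
    have h1 : (0:ℝ) < 1 + w s := by linarith [(hmem s).1]
    have h2 : (0:ℝ) < 1 - w s := by linarith [(hmem s).2]
    unfold arctanh
    rw [Real.log_div h1.ne' h2.ne']
  have h1 : (0:ℝ) < 1 + w s := by linarith [(hmem s).1]
  have h2 : (0:ℝ) < 1 - w s := by linarith [(hmem s).2]
  have hl1 : HasDerivAt (fun s => Real.log (1 + w s)) (w' s / (1 + w s)) s := by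
    have : HasDerivAt (fun s => 1 + w s) (w' s) s := hwd.const_add 1
    simpa using this.log h1.ne'
  have hl2 : HasDerivAt (fun s => Real.log (1 - w s)) (-w' s / (1 - w s)) s := by
    have : HasDerivAt (fun s => 1 - w s) (-w' s) s := hwd.const_sub 1
    simpa using this.log h2.ne'
  have := ((hl1.sub hl2).const_mul (1/2 : ℝ))
  simp only [Pi.sub_apply] at this
  rw [← hfun] at this
  have halg : ∀ p q : ℝ, 1 + p ≠ 0 → 1 - p ≠ 0 →
      q / (1 - p ^ 2) = 1 / 2 * (q / (1 + p) - -q / (1 - p)) := by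
    intro p q hp hq
    have hfac : 1 - p ^ 2 = (1 + p) * (1 - p) := by ring
    rw [hfac]
    field_simp
    ring
  rw [halg (w s) (w' s) h1.ne' h2.ne']
  exact this

lemma diag_lipschitz (t a b : ℝ) (ht0 : 0 ≤ t) (ht1 : t ≤ 1) :
    LipschitzWith 1 (fun s => arctanh (t * Real.tanh (s + a) + (1 - t) * Real.tanh (s + b))) := by
  apply lipschitzWith_of_nnnorm_deriv_le
  · exact fun s => (diag_hasDerivAt t a b ht0 ht1 s).differentiableAt
  · intro s
    rw [(diag_hasDerivAt t a b ht0 ht1 s).deriv]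
    set A := Real.tanh (s + a) with hAdef
    set B := Real.tanh (s + b) with hBdef
    have hA : A ∈ Set.Ioo (-1 : ℝ) 1 := tanh_mem_Ioo (s + a)
    have hB : B ∈ Set.Ioo (-1 : ℝ) 1 := tanh_mem_Ioo (s + b)
    have hw : t * A + (1 - t) * B ∈ Set.Ioo (-1 : ℝ) 1 := combo_mem ht0 ht1
    have hden : (0:ℝ) < 1 - (t * A + (1 - t) * B) ^ 2 := by nlinarith [hw.1, hw.2]
    have hA2 : A ^ 2 < 1 := by nlinarith [mul_pos (by linarith [hA.1] : (0:ℝ) < 1 + A) (by linarith [hA.2] : (0:ℝ) < 1 - A)]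
    have hB2 : B ^ 2 < 1 := by nlinarith [mul_pos (by linarith [hB.1] : (0:ℝ) < 1 + B) (by linarith [hB.2] : (0:ℝ) < 1 - B)]
    have hnum0 : (0:ℝ) ≤ t * (1 - A ^ 2) + (1 - t) * (1 - B ^ 2) := by
      nlinarith
    have hkey : t * (1 - A ^ 2) + (1 - t) * (1 - B ^ 2) ≤
        1 - (t * A + (1 - t) * B) ^ 2 := by nlinarith [sq_nonneg (A - B), mul_nonneg ht0 (by linarith : (0:ℝ) ≤ 1 - t)]
    have habs : |(t * (1 - A ^ 2) + (1 - t) * (1 - B ^ 2)) /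
        (1 - (t * A + (1 - t) * B) ^ 2)| ≤ 1 := by
      rw [abs_div, abs_of_nonneg hnum0, abs_of_pos hden, div_le_one hden]
      exact hkey
    rw [← NNReal.coe_le_coe, coe_nnnorm, Real.norm_eq_abs]
    exact_mod_cast habs

lemma mono (t : ℝ) (ht0 : 0 ≤ t) (ht1 : t ≤ 1) {u u' v v' : ℝ}
    (hu : u ≤ u') (hv : v ≤ v') :
    arctanh (t * Real.tanh u + (1 - t) * Real.tanh v) ≤
      arctanh (t * Real.tanh u' + (1 - t) * Real.tanh v') := by
  apply arctanh_le_arctanh (combo_mem ht0 ht1) (combo_mem ht0 ht1)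
  have h1 := tanh_monotone hu
  have h2 := tanh_monotone hv
  nlinarith

lemma diag_le (t a b c : ℝ) (ht0 : 0 ≤ t) (ht1 : t ≤ 1) (hc : 0 ≤ c) :
    arctanh (t * Real.tanh (a + c) + (1 - t) * Real.tanh (b + c)) ≤
      arctanh (t * Real.tanh a + (1 - t) * Real.tanh b) + c := by
  have h := (diag_lipschitz t a b ht0 ht1).dist_le_mul c 0
  rw [Real.dist_eq, Real.dist_eq] at h
  simp only [sub_zero, NNReal.coe_one, one_mul, zero_add] at h
  rw [abs_of_nonneg hc] at h
  have h2 := (abs_le.mp h).2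
  rw [add_comm a c, add_comm b c]
  linarith

end Stmt15Aux

theorem stmt15 (N : ℕ) (t : ℝ) (ht : t ∈ Set.Icc (0 : ℝ) 1)
    (f g : EuclideanSpace ℝ (Fin N) → ℝ)
    (hf : LipschitzWith 1 f) (hg : LipschitzWith 1 g) :
    LipschitzWith 1 (fun x =>
      arctanh (t * Real.tanh (f x) + (1 - t) * Real.tanh (g x))) := by
  obtain ⟨ht0, ht1⟩ := ht
  apply LipschitzWith.of_dist_le_mul
  intro x y
  set d := dist x y with hd
  have hd0 : 0 ≤ d := dist_nonneg
  have hfd : |f x - f y| ≤ d := by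
    have := hf.dist_le_mul x y
    rwa [Real.dist_eq, NNReal.coe_one, one_mul] at this
  have hgd : |g x - g y| ≤ d := by
    have := hg.dist_le_mul x y
    rwa [Real.dist_eq, NNReal.coe_one, one_mul] at this
  obtain ⟨hf1, hf2⟩ := abs_le.mp hfd
  obtain ⟨hg1, hg2⟩ := abs_le.mp hgd
  rw [Real.dist_eq, NNReal.coe_one, one_mul]
  rw [abs_le]
  constructor
  · have h1 : arctanh (t * Real.tanh (f y) + (1 - t) * Real.tanh (g y)) ≤
        arctanh (t * Real.tanh (f x + d) + (1 - t) * Real.tanh (g x + d)) :=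
      Stmt15Aux.mono t ht0 ht1 (by linarith) (by linarith)
    have h2 := Stmt15Aux.diag_le t (f x) (g x) d ht0 ht1 hd0
    linarith
  · have h1 : arctanh (t * Real.tanh (f x) + (1 - t) * Real.tanh (g x)) ≤
        arctanh (t * Real.tanh (f y + d) + (1 - t) * Real.tanh (g y + d)) :=
      Stmt15Aux.mono t ht0 ht1 (by linarith) (by linarith)
    have h2 := Stmt15Aux.diag_le t (f y) (g y) d ht0 ht1 hd0
    linarith
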